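/- Let K be a totally real number field of degree N over ℚ containing F_l = ℚ(cos(2π/l)) for some l ≥ 3, and let α ∈ O_K be a nonzero algebraic integer such that 0 < σ(α) < a·σ(sin²(π/l)) for all real embeddings σ ≠ id, and |α| < b for the identity embedding, where 0 < a < 4 and b ≥ a. Then N·(ln(2/√a) − ln(γ(l))/φ(l)) < ln√(b/a) − ln sin(π/l), where γ(l) = p if l = pᵗ > 2 is a prime power and 1 otherwise. -/

import Mathlib

open Real IntermediateField

/-- γ(l) = p if l = pᵗ > 2 is a prime power, and 1 otherwise. -/
def gammaNik (l : ℕ) : ℕ := if IsPrimePow l then l.minFac else 1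

open Polynomial in
lemma gammaNik_pos (l : ℕ) : 0 < gammaNik l := by
  unfold gammaNik
  split_ifs with h
  · exact Nat.minFac_pos l
  · norm_num

open Polynomial in
lemma eval_one_cyclotomic_gamma {l : ℕ} (hl : 3 ≤ l) :
    Polynomial.eval 1 (Polynomial.cyclotomic l ℤ) = gammaNik l := by
  unfold gammaNik
  split_ifs with h
  · obtain ⟨p, k, hp, hk, rfl⟩ := h
    haveI : Fact p.Prime := ⟨hp.nat_prime⟩
    obtain ⟨k, rfl⟩ : ∃ k', k = k' + 1 := ⟨k - 1, by omega⟩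
    rw [Polynomial.eval_one_cyclotomic_prime_pow, Nat.Prime.pow_minFac hp.nat_prime (by omega)]
  · rw [Polynomial.eval_one_cyclotomic_not_prime_pow, Nat.cast_one]
    intro p hp k hpk
    rcases Nat.eq_zero_or_pos k with rfl | hk
    · simp at hpk; omega
    · exact h ⟨p, k, hp.prime, hk, hpk⟩

open Polynomial in
lemma norm_eq_q_pow {k M : Type*} [Field k] [Field M] [Algebra k M] [FiniteDimensional k M]
    [Algebra.IsSeparable k M] (y : M) :
    Algebra.norm k y =
      ((-1) ^ (minpoly k y).natDegree * (minpoly k y).coeff 0) ^ Module.finrank (↥k⟮y⟯) M := by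
  have hy : IsIntegral k y := IsIntegral.of_finite k y
  rw [Algebra.norm_eq_norm_adjoin k y]
  congr 1
  have := Algebra.PowerBasis.norm_gen_eq_coeff_zero_minpoly (adjoin.powerBasis hy)
  rw [adjoin.powerBasis_gen, minpoly_gen] at this
  rw [this, adjoin.powerBasis_dim]

open Polynomial in
set_option maxHeartbeats 1000000 in
set_option synthInstance.maxHeartbeats 400000 in
lemma cycloKey (l : ℕ) (hl : 3 ≤ l) :
    (((-1) ^ (minpoly ℚ ((4:ℝ) * Real.sin (π/l)^2)).natDegree *
        (minpoly ℚ ((4:ℝ) * Real.sin (π/l)^2)).coeff 0) : ℚ) ^ 2 = (gammaNik l : ℚ) ^ 2 ∧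
      2 * (minpoly ℚ ((4:ℝ) * Real.sin (π/l)^2)).natDegree = Nat.totient l := by
  have hlpos : 0 < l := by omega
  set n : ℕ+ := ⟨l, hlpos⟩ with hn
  have hnl : (n : ℕ) = l := rfl
  have hirr : Irreducible (cyclotomic l ℚ) := Polynomial.cyclotomic.irreducible_rat hlpos
  have hirr' : Irreducible (cyclotomic ((n:ℕ)) ℚ) := hirr
  set L := CyclotomicField n ℚ with hL
  haveI : NeZero (((n:ℕ)):ℚ) := ⟨Nat.cast_ne_zero.mpr (by omega)⟩
  haveI : IsCyclotomicExtension {(n:ℕ)} ℚ L := CyclotomicField.isCyclotomicExtension _ _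
  haveI : FiniteDimensional ℚ L := IsCyclotomicExtension.finiteDimensional {(n:ℕ)} ℚ L
  set z : L := IsCyclotomicExtension.zeta n ℚ L with hzdef
  have hz : IsPrimitiveRoot z l := IsCyclotomicExtension.zeta_spec n ℚ L
  have hzn : IsPrimitiveRoot z ((n:ℕ)) := hz
  have hzne : z ≠ 0 := hz.ne_zero (by omega)
  set u : L := (z - 1) * (z⁻¹ - 1) with hu
  have hz3 : 2 < (n : ℕ) := by rw [hnl]; omega
  -- norm of u is γ²
  have hnormu : Algebra.norm ℚ u = (gammaNik l : ℚ) ^ 2 := by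
    have h1 : Algebra.norm ℚ (z - 1) = ((eval 1 (cyclotomic l ℤ) : ℤ) : ℚ) :=
      hzn.sub_one_norm_eq_eval_cyclotomic hz3 hirr'
    have h2 : Algebra.norm ℚ (z⁻¹ - 1) = ((eval 1 (cyclotomic l ℤ) : ℤ) : ℚ) :=
      (hzn.inv).sub_one_norm_eq_eval_cyclotomic hz3 hirr'
    rw [hu, map_mul, h1, h2, eval_one_cyclotomic_gamma hl]
    push_cast
    ring
  -- embedding into ℂ sending z to exp(2πi/l)
  set ζ : ℂ := Complex.exp (2 * π * Complex.I / l) with hzeta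
  have hζ : IsPrimitiveRoot ζ l := Complex.isPrimitiveRoot_exp l (by omega)
  have hζmem : ζ ∈ primitiveRoots l ℂ := (mem_primitiveRoots hlpos).2 hζ
  set φ : L →ₐ[ℚ] ℂ := (hzn.embeddingsEquivPrimitiveRoots ℂ hirr').symm ⟨ζ, hζmem⟩ with hφ
  have hφz : φ z = ζ := by
    have h := hzn.embeddingsEquivPrimitiveRoots_apply_coe ℂ hirr' φ
    rw [hφ, Equiv.apply_symm_apply] at h
    exact h.symm
  -- φ u = 4 sin²(π/l)
  have hφu : φ u = ((4 * Real.sin (π/l)^2 : ℝ) : ℂ) := by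
    have hζinv : ζ⁻¹ = Complex.exp (-(2 * π * Complex.I / l)) := by
      rw [hzeta, ← Complex.exp_neg]
    have hsum : ζ + ζ⁻¹ = 2 * Real.cos (2 * π / l) := by
      have h1 : ζ = Complex.exp (((2 * π / l : ℝ) : ℂ) * Complex.I) := by
        rw [hzeta]; congr 1; push_cast; ring
      have h2 : ζ⁻¹ = Complex.exp ((((-(2 * π / l)) : ℝ) : ℂ) * Complex.I) := by
        rw [h1, ← Complex.exp_neg]; congr 1; push_cast; ring
      rw [h2, h1, Complex.exp_mul_I, Complex.exp_mul_I]
      push_cast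
      simp [Complex.cos_neg, Complex.sin_neg, ← Complex.ofReal_cos]
      ring
    have hprod : ζ * ζ⁻¹ = 1 := mul_inv_cancel₀ (by rw [hzeta]; exact Complex.exp_ne_zero _)
    have hcos : (2 : ℝ) - 2 * Real.cos (2 * π / l) = 4 * Real.sin (π/l)^2 := by
      have h1 := Real.cos_two_mul (π / l)
      have h2 := Real.sin_sq_add_cos_sq (π / l)
      have : 2 * (π / l) = 2 * π / l := by ring
      rw [this] at h1
      nlinarith
    rw [hu, map_mul, map_sub, map_sub, map_one, map_inv₀, hφz]
    have : (ζ - 1) * (ζ⁻¹ - 1) = ζ * ζ⁻¹ - (ζ + ζ⁻¹) + 1 := by ring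
    rw [this, hprod, hsum, ← hcos]
    push_cast
    ring
  -- minpoly of u equals minpoly of 4 sin²(π/l)
  have hminpoly : minpoly ℚ u = minpoly ℚ ((4:ℝ) * Real.sin (π/l)^2) := by
    have hinj : Function.Injective φ := φ.toRingHom.injective
    rw [← minpoly.algHom_eq φ hinj u, hφu]
    have h4 : ((4 * Real.sin (π/l)^2 : ℝ) : ℂ) = algebraMap ℝ ℂ ((4:ℝ) * Real.sin (π/l)^2) := by
      norm_num
    rw [h4, minpoly.algebraMap_eq (algebraMap ℝ ℂ).injective]
  have hintu : IsIntegral ℚ u := IsIntegral.of_finite ℚ u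
  set d0 := (minpoly ℚ u).natDegree with hd0def
  have hfinL : Module.finrank ℚ L = l.totient := by
    have := IsCyclotomicExtension.finrank (n := (n:ℕ)) L hirr'
    exact this
  have hd0 : Module.finrank ℚ ↥ℚ⟮u⟯ = d0 := adjoin.finrank hintu
  set e' := Module.finrank ↥ℚ⟮u⟯ L with he'def
  have htower : d0 * e' = l.totient := by
    rw [← hd0, ← hfinL, he'def]
    exact Module.finrank_mul_finrank ℚ ↥ℚ⟮u⟯ L
  haveI : NeZero ((n:ℕ)) := ⟨by omega⟩
  have hminz : minpoly ℚ z = cyclotomic ((n:ℕ)) ℚ :=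
    (hzn.minpoly_eq_cyclotomic_of_irreducible hirr').symm
  have hztop : ℚ⟮z⟯ = ⊤ := by
    apply eq_of_le_of_finrank_eq le_top
    rw [adjoin.finrank (IsIntegral.of_finite ℚ z), hminz, natDegree_cyclotomic, finrank_top',
      hfinL, hnl]
  have hFz : (↥ℚ⟮u⟯)⟮z⟯ = ⊤ := by
    rw [eq_top_iff]
    intro x _
    have hle : ℚ⟮z⟯ ≤ restrictScalars ℚ (↥ℚ⟮u⟯)⟮z⟯ := by
      rw [adjoin_simple_le_iff]
      exact mem_adjoin_simple_self (↥ℚ⟮u⟯) z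
    have hx : x ∈ restrictScalars ℚ (↥ℚ⟮u⟯)⟮z⟯ := hle (hztop ▸ mem_top)
    exact hx
  have hzint' : IsIntegral (↥ℚ⟮u⟯) z := IsIntegral.of_finite _ z
  have he'eq : e' = (minpoly (↥ℚ⟮u⟯) z).natDegree := by
    rw [he'def, ← adjoin.finrank hzint', hFz, finrank_top']
  have he'le : e' ≤ 2 := by
    have hwu : algebraMap (↥ℚ⟮u⟯) L (AdjoinSimple.gen ℚ u) = u := AdjoinSimple.algebraMap_gen ℚ u
    set p : Polynomial (↥ℚ⟮u⟯) := X^2 + C (AdjoinSimple.gen ℚ u - 2) * X + C 1 with hp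
    have hzu : u * z = 2 * z - z^2 - 1 := by
      rw [hu]
      have hzz : z⁻¹ * z = 1 := inv_mul_cancel₀ hzne
      linear_combination (z - 1) * hzz
    have hpz : (aeval z) p = 0 := by
      rw [hp]
      simp only [map_add, map_mul, map_pow, aeval_X, aeval_C, map_sub, map_one, map_ofNat, hwu]
      linear_combination hzu
    have hpne : p ≠ 0 := by
      intro h
      have := congrArg (fun q => Polynomial.coeff q 2) h
      simp [hp, coeff_one] at this
    have hdeg : p.natDegree ≤ 2 := by
      rw [hp]
      compute_degree
    calc e' = (minpoly (↥ℚ⟮u⟯) z).natDegree := he'eq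
      _ ≤ p.natDegree := Polynomial.natDegree_le_of_dvd (minpoly.dvd _ z hpz) hpne
      _ ≤ 2 := hdeg
  have he'pos : 0 < e' := by
    rw [he'def]
    exact Module.finrank_pos
  have he'ne1 : e' ≠ 1 := by
    intro h1
    have hd0tot : d0 = l.totient := by rw [h1, mul_one] at htower; exact htower
    have hutop : ℚ⟮u⟯ = ⊤ := by
      apply eq_of_le_of_finrank_eq le_top
      rw [hd0, hd0tot, finrank_top', hfinL]
    have hzmem : z ∈ ℚ⟮u⟯ := by rw [hutop]; trivial
    have hratmem : ∀ q : ℚ, algebraMap ℚ L q ∈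
        (Complex.ofRealHom.fieldRange).comap (φ : L →+* ℂ) := by
      intro q
      refine ⟨(q : ℝ), ?_⟩
      simp [AlgHom.commutes]
    set P : IntermediateField ℚ L :=
      Subfield.toIntermediateField ((Complex.ofRealHom.fieldRange).comap (φ : L →+* ℂ))
        hratmem with hP
    have hup : ℚ⟮u⟯ ≤ P := by
      rw [adjoin_simple_le_iff]
      show φ u ∈ Complex.ofRealHom.fieldRange
      exact ⟨(4 * Real.sin (π/l)^2 : ℝ), hφu.symm⟩
    have hzP : φ z ∈ Complex.ofRealHom.fieldRange := hup hzmem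
    obtain ⟨r, hr⟩ := hzP
    have him : ζ.im = Real.sin (2*π/l) := by
      set θ : ℝ := 2 * π / (l:ℝ) with hθ
      have harg : 2 * ↑π * Complex.I / ↑l = (θ : ℂ) * Complex.I := by
        rw [hθ]; push_cast; ring
      rw [hzeta, harg, Complex.exp_mul_I]
      rw [Complex.add_im, Complex.mul_im, Complex.I_re, Complex.I_im, Complex.cos_ofReal_im,
        Complex.sin_ofReal_re, Complex.sin_ofReal_im]
      ring
    have hsinpos : 0 < Real.sin (2*π/l) := by
      apply Real.sin_pos_of_pos_of_lt_pi
      · positivity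
      · rw [div_lt_iff₀ (by exact_mod_cast hlpos)]
        have : (3:ℝ) ≤ l := by exact_mod_cast hl
        nlinarith [Real.pi_pos]
    have : ζ.im = 0 := by
      rw [hφz] at hr
      rw [← hr]
      simp
    rw [him] at this
    linarith
  have he'2 : e' = 2 := by omega
  constructor
  · have hq := norm_eq_q_pow (k := ℚ) u
    rw [hnormu, ← he'def, he'2] at hq
    rw [← hminpoly]
    exact hq.symm
  · rw [← hminpoly, ← hd0def]
    rw [he'2] at htower
    omega

lemma prod_embeddings_eq_norm (K : IntermediateField ℚ ℝ) [FiniteDimensional ℚ K]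
    [Fintype (K →+* ℝ)]
    (htot : Nat.card (K →+* ℝ) = Module.finrank ℚ K) (x : K) :
    ∏ σ : K →+* ℝ, σ x = algebraMap ℚ ℝ (Algebra.norm ℚ x) := by
  haveI : NumberField K := ⟨⟩
  let f : (K →+* ℝ) → (K →+* ℂ) := fun σ => Complex.ofRealHom.comp σ
  have hfinj : Function.Injective f := by
    intro σ τ h
    ext y
    exact Complex.ofReal_injective (RingHom.congr_fun h y)
  have hcard : Fintype.card (K →+* ℝ) = Fintype.card (K →+* ℂ) := by
    rw [Fintype.card_eq_nat_card, Fintype.card_eq_nat_card, htot, Nat.card_eq_fintype_card,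
      NumberField.Embeddings.card K ℂ]
  have hbij : Function.Bijective f :=
    (Fintype.bijective_iff_injective_and_card f).2 ⟨hfinj, hcard⟩
  apply Complex.ofReal_injective
  have h1 : ((∏ σ : K →+* ℝ, σ x : ℝ) : ℂ) = ∏ σ : K →+* ℝ, (f σ) x := by
    push_cast
    rfl
  have h2 : ∏ σ : K →+* ℝ, (f σ) x = ∏ τ : K →+* ℂ, τ x :=
    Fintype.prod_bijective f hbij _ _ (fun σ => rfl)
  have h3 : ∏ τ : K →+* ℂ, τ x = ∏ τ : K →ₐ[ℚ] ℂ, τ x :=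
    Fintype.prod_equiv (RingHom.equivRatAlgHom _ _) _ _ (fun τ => rfl)
  rw [h1, h2, h3, ← Algebra.norm_eq_prod_embeddings ℚ ℂ x]
  simp

lemma one_le_abs_norm (K : IntermediateField ℚ ℝ) [FiniteDimensional ℚ K]
    (α : K) (hint : IsIntegral ℤ α) (hα : α ≠ 0) :
    1 ≤ |algebraMap ℚ ℝ (Algebra.norm ℚ α)| := by
  have h : IsIntegral ℤ (Algebra.norm ℚ α) := Algebra.isIntegral_norm ℚ hint
  obtain ⟨m, hm⟩ := IsIntegrallyClosed.isIntegral_iff.mp h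
  have hne : Algebra.norm ℚ α ≠ 0 := Algebra.norm_ne_zero_iff.mpr hα
  have hm0 : m ≠ 0 := by rintro rfl; rw [← hm] at hne; simp at hne
  rw [← hm]
  have h1 : (1:ℤ) ≤ |m| := Int.one_le_abs hm0
  have : algebraMap ℚ ℝ ((algebraMap ℤ ℚ) m) = (m:ℝ) := by
    simp [eq_intCast]
  rw [this]
  exact_mod_cast h1


set_option maxHeartbeats 1000000 in
set_option synthInstance.maxHeartbeats 1000000 in
theorem norm_method_B (l : ℕ) (hl : 3 ≤ l) (a b : ℝ)
    (ha0 : 0 < a) (ha4 : a < 4) (hab : a ≤ b)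
    (K : IntermediateField ℚ ℝ) [FiniteDimensional ℚ K]
    (htotreal : Nat.card (K →+* ℝ) = Module.finrank ℚ K)
    (hcos : Real.cos (2*π/l) ∈ K)
    (hsin : Real.sin (π/l)^2 ∈ K)
    (α : K) (hint : IsIntegral ℤ α) (hα : α ≠ 0)
    (hσ : ∀ σ : K →+* ℝ, σ ≠ (algebraMap K ℝ : K →+* ℝ) →
      0 < σ α ∧ σ α < a * σ ⟨Real.sin (π/l)^2, hsin⟩)
    (hid : |(algebraMap K ℝ) α| < b) :
    (Module.finrank ℚ K : ℝ) *
        (Real.log (2 / Real.sqrt a) - Real.log (gammaNik l) / (Nat.totient l)) <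
      Real.log (Real.sqrt (b / a)) - Real.log (Real.sin (π/l)) := by
  classical
  haveI : NumberField K := ⟨⟩
  set N := Module.finrank ℚ K with hN
  set s : ℝ := Real.sin (π/l)^2 with hs
  set sK : K := ⟨s, hsin⟩ with hsK
  set τ : K := 4 * sK with hτ
  have hlR : (3:ℝ) ≤ l := by exact_mod_cast hl
  have hπl0 : 0 < π/l := by positivity
  have hπlπ : π/l < π := by
    rw [div_lt_iff₀ (by positivity)]
    nlinarith [Real.pi_pos]
  have hsinpos : 0 < Real.sin (π/l) := Real.sin_pos_of_pos_of_lt_pi hπl0 hπlπ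
  have hspos : 0 < s := by rw [hs]; positivity
  -- basic embedding facts
  have hσsK : ∀ σ : K →+* ℝ, 0 < σ sK := by
    intro σ
    by_cases hσid : σ = (algebraMap K ℝ : K →+* ℝ)
    · rw [hσid]
      show (0:ℝ) < (sK : ℝ)
      exact hspos
    · have h1 := (hσ σ hσid).1
      have h2 := (hσ σ hσid).2
      nlinarith
  have hστ : ∀ σ : K →+* ℝ, σ τ = 4 * σ sK := by
    intro σ; rw [hτ, map_mul, map_ofNat]
  -- minpoly of τ
  have hτmap : algebraMap K ℝ τ = (4:ℝ) * s := by
    rw [hτ, map_mul, map_ofNat]; rfl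
  have hmin : minpoly ℚ ((4:ℝ) * s) = minpoly ℚ τ := by
    rw [← hτmap]
    exact minpoly.algebraMap_eq (algebraMap K ℝ).injective τ
  obtain ⟨hq2, hdeg⟩ := cycloKey l hl
  rw [← hs] at hq2 hdeg
  rw [hmin] at hq2 hdeg
  set q : ℚ := (-1) ^ (minpoly ℚ τ).natDegree * (minpoly ℚ τ).coeff 0 with hqdef
  set d0 : ℕ := (minpoly ℚ τ).natDegree with hd0
  set e : ℕ := Module.finrank (↥ℚ⟮τ⟯) K with he
  have hNde : d0 * e = N := by
    rw [hd0, he, hN, ← adjoin.finrank (IsIntegral.of_finite ℚ τ)]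
    exact Module.finrank_mul_finrank ℚ (↥ℚ⟮τ⟯) K
  have hnormτ : Algebra.norm ℚ τ = q ^ e := norm_eq_q_pow τ
  -- product of embeddings of τ
  have hγR : (0:ℝ) < (gammaNik l : ℝ) := by exact_mod_cast gammaNik_pos l
  have hPval : ∏ σ : K →+* ℝ, σ τ = ((q:ℝ)) ^ e := by
    rw [prod_embeddings_eq_norm K htotreal τ, hnormτ, map_pow]
    norm_num
  have hPpos : 0 < ∏ σ : K →+* ℝ, σ τ := by
    apply Finset.prod_pos
    intro σ _
    rw [hστ σ]
    have := hσsK σ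
    positivity
  have hPγ : ∏ σ : K →+* ℝ, σ τ = ((gammaNik l : ℝ)) ^ e := by
    have hq2R : ((q:ℝ)) ^ 2 = ((gammaNik l : ℝ)) ^ 2 := by exact_mod_cast hq2
    rcases sq_eq_sq_iff_eq_or_eq_neg.mp hq2R with h | h
    · rw [hPval, h]
    · rw [hPval, h]
      rcases Nat.even_or_odd e with he' | he'
      · rw [he'.neg_pow]
      · exfalso
        rw [hPval, h, he'.neg_pow] at hPpos
        have := pow_pos hγR e
        linarith
  -- number of embeddings
  have hNcard : Fintype.card (K →+* ℝ) = N := by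
    rw [Fintype.card_eq_nat_card, htotreal]
  have hNpos : 0 < N := Module.finrank_pos
  -- norm of α bound
  set idK : K →+* ℝ := (algebraMap K ℝ : K →+* ℝ) with hidK
  have h1le : (1:ℝ) ≤ ∏ σ : K →+* ℝ, |σ α| := by
    rw [← Finset.abs_prod, prod_embeddings_eq_norm K htotreal α]
    exact one_le_abs_norm K α hint hα
  set A : ℝ := ∏ σ ∈ Finset.univ.erase idK, |σ α| with hA
  set B : ℝ := ∏ σ ∈ Finset.univ.erase idK, (a * σ sK) with hB
  set C : ℝ := ∏ σ ∈ Finset.univ.erase idK, σ sK with hC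
  have hsplit : ∏ σ : K →+* ℝ, |σ α| = |idK α| * A := by
    rw [hA]
    exact (Finset.mul_prod_erase Finset.univ (fun σ => |σ α|) (Finset.mem_univ idK)).symm
  have hAB : A ≤ B := by
    apply Finset.prod_le_prod
    · intro σ _; exact abs_nonneg _
    · intro σ hσ'
      have hne := Finset.ne_of_mem_erase hσ'
      rw [abs_of_pos (hσ σ hne).1]
      exact le_of_lt (hσ σ hne).2
  have hBpos : 0 < B := by
    apply Finset.prod_pos
    intro σ _
    exact mul_pos ha0 (hσsK σ)
  have hApos : 0 ≤ A := Finset.prod_nonneg fun σ _ => abs_nonneg _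
  have hkey1 : (1:ℝ) < b * B := by
    calc (1:ℝ) ≤ |idK α| * A := by rw [← hsplit]; exact h1le
      _ ≤ |idK α| * B := by apply mul_le_mul_of_nonneg_left hAB (abs_nonneg _)
      _ < b * B := by apply mul_lt_mul_of_pos_right hid hBpos
  have hcarde : (Finset.univ.erase idK).card = N - 1 := by
    rw [Finset.card_erase_of_mem (Finset.mem_univ idK), Finset.card_univ, hNcard]
  have hBC : B = a ^ (N-1) * C := by
    rw [hB, hC, Finset.prod_mul_distrib, Finset.prod_const, hcarde]
  have hsC : s * C = ((gammaNik l : ℝ)) ^ e / 4 ^ N := by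
    have h1 : ∏ σ : K →+* ℝ, σ sK = s * C := by
      rw [hC, ← Finset.mul_prod_erase Finset.univ _ (Finset.mem_univ idK)]
      rfl
    have h2 : ∏ σ : K →+* ℝ, σ τ = 4 ^ N * ∏ σ : K →+* ℝ, σ sK := by
      rw [Finset.prod_congr rfl (fun σ _ => hστ σ), Finset.prod_mul_distrib,
        Finset.prod_const, Finset.card_univ, hNcard]
    rw [← h1, eq_div_iff (by positivity)]
    rw [hPγ] at h2
    linarith [h2]
  -- numeric inequality
  have hnum : (4:ℝ) ^ N * s < b * a ^ (N-1) * ((gammaNik l : ℝ)) ^ e := by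
    have h4s : (0:ℝ) < 4 ^ N * s := by positivity
    calc (4:ℝ)^N * s = 4^N * s * 1 := by ring
      _ < 4^N * s * (b * B) := by exact mul_lt_mul_of_pos_left hkey1 h4s
      _ = b * a^(N-1) * (4^N * (s * C)) := by rw [hBC]; ring
      _ = b * a^(N-1) * ((gammaNik l : ℝ)) ^ e := by
          rw [hsC]; field_simp
  -- take logs
  have hbpos : 0 < b := lt_of_lt_of_le ha0 hab
  have hlog := Real.log_lt_log (by positivity) hnum
  rw [Real.log_mul (by positivity) (by positivity), Real.log_mul (by positivity) (by positivity),
    Real.log_mul (by positivity) (by positivity), Real.log_pow, Real.log_pow, Real.log_pow, Real.log_pow] at hlog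
  have hlog4 : Real.log 4 = 2 * Real.log 2 := by
    rw [show (4:ℝ) = 2^2 by norm_num, Real.log_pow]; push_cast; ring
  have hlogs : Real.log s = 2 * Real.log (Real.sin (π/l)) := by
    rw [hs, Real.log_pow]; push_cast; ring
  have hN1 : ((N - 1 : ℕ) : ℝ) = (N:ℝ) - 1 := by
    have : 1 ≤ N := hNpos
    push_cast [Nat.cast_sub this]
    ring
  have hφpos : 0 < Nat.totient l := Nat.totient_pos.mpr (by omega)
  have hrel : (N:ℝ) * Real.log (gammaNik l) / (Nat.totient l : ℝ) =
      (e:ℝ) * Real.log (gammaNik l) / 2 := by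
    have hcast : (N:ℝ) * 2 = (Nat.totient l : ℝ) * (e:ℝ) := by
      have : N * 2 = Nat.totient l * e := by
        rw [← hNde, ← hdeg]; ring
      exact_mod_cast this
    rw [div_eq_div_iff (by exact_mod_cast hφpos.ne') (by norm_num)]
    linear_combination Real.log (gammaNik l) * hcast
  rw [Real.log_div (by norm_num) (by positivity), Real.log_sqrt (le_of_lt ha0),
    Real.log_sqrt (by positivity), Real.log_div (ne_of_gt hbpos) (ne_of_gt ha0)]
  rw [hN1, hlog4] at hlog
  push_cast at hlog
  have hfin : (N:ℝ) * (Real.log 2 - Real.log a / 2 -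
      Real.log (gammaNik l) / (Nat.totient l : ℝ)) =
      (N:ℝ) * Real.log 2 - (N:ℝ) * Real.log a / 2 - (e:ℝ) * Real.log (gammaNik l) / 2 := by
    rw [mul_sub, show (N:ℝ) * (Real.log (gammaNik l) / (Nat.totient l : ℝ)) =
      (N:ℝ) * Real.log (gammaNik l) / (Nat.totient l : ℝ) by ring, hrel]
    ring
  rw [hfin]
  linarith [hlog]
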